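/- Let G be a graph with a tree decomposition 𝒯 rooted at r with root bag empty, let n = |V(G)|, and let s ≤ n. Then there exists a node t of 𝒯 such that s ≤ |V_t| ≤ 2s, where V_t is the set of vertices appearing in bags of the subtree rooted at t, provided every node of 𝒯 has at most 2 children and leaf bags are empty and each node's bag differs from its child's bag by at most one vertex (nice tree decomposition). -/

import Mathlib

/-- In the tree `T` rooted at `r`, `t'` is a descendant of `t` (possibly `t' = t`) iff `t`
lies on every walk from `t'` to the root `r`. -/
def Desc {W : Type*} (T : SimpleGraph W) (r t t' : W) : Prop :=
  ∀ p : T.Walk t' r, t ∈ p.support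

/-- `V_t`: the set of vertices appearing in the bags of the subtree rooted at `t`
(i.e. in bags of descendants of `t`, including `t` itself). -/
def Vt {V W : Type*} (T : SimpleGraph W) (r : W) (bag : W → Set V) (t : W) : Set V :=
  {v | ∃ t', Desc T r t t' ∧ v ∈ bag t'}

/-- `t'` is a child of `t` in the tree `T` rooted at `r`. -/
def IsChild {W : Type*} (T : SimpleGraph W) (r t t' : W) : Prop :=
  T.Adj t t' ∧ Desc T r t t'

set_option linter.unusedSectionVars false
namespace NiceTD

variable {W : Type*} [DecidableEq W] {T : SimpleGraph W} {r : W}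

lemma desc_refl (t : W) : Desc T r t t := fun p => p.start_mem_support

lemma desc_root (t : W) : Desc T r r t := fun p => p.end_mem_support

lemma desc_of_mem_path (hac : T.IsAcyclic) {t t' : W} (p : T.Walk t' r)
    (hp : p.IsPath) (ht : t ∈ p.support) : Desc T r t t' := by
  intro w
  have h := hac.path_unique ⟨p, hp⟩ w.toPath
  have h2 : t ∈ (w.toPath : T.Walk t' r).support := by rw [← h]; exact ht
  exact w.support_toPath_subset h2

lemma desc_of_child {t c x : W} (h : IsChild T r t c) (hx : Desc T r c x) :
    Desc T r t x := by
  intro w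
  have hc : c ∈ w.support := hx w
  have := h.2 (w.dropUntil c hc)
  exact w.support_dropUntil_subset hc this

lemma not_desc_child_self (hconn : T.Connected) (hac : T.IsAcyclic) {t c : W}
    (h : IsChild T r t c) : ¬ Desc T r c t := by
  intro hd
  obtain ⟨w⟩ := hconn t r
  set p : T.Walk t r := (w.toPath : T.Walk t r) with hp
  have hpath : p.IsPath := w.toPath.2
  have hcp : c ∈ p.support := hd p
  have htd : t ∈ (p.dropUntil c hcp).support := h.2 _
  -- p.support is nodup, t is the start; dropUntil starts at c ≠ t
  have hnodup := hpath.support_nodup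
  rw [← p.take_spec hcp] at hnodup
  rw [SimpleGraph.Walk.support_append] at hnodup
  have hts : t ∈ (p.takeUntil c hcp).support := SimpleGraph.Walk.start_mem_support _
  rw [(p.dropUntil c hcp).support_eq_cons] at htd
  rcases List.mem_cons.mp htd with htd | htd
  · exact h.1.ne htd
  · rw [List.nodup_append] at hnodup
    exact hnodup.2.2 t hts t htd rfl

lemma desc_step (hconn : T.Connected) (hac : T.IsAcyclic) {t t' : W}
    (hd : Desc T r t t') (hne : t' ≠ t) :
    ∃ c, IsChild T r t c ∧ Desc T r c t' := by
  obtain ⟨w0⟩ := hconn t' r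
  set p : T.Walk t' r := (w0.toPath : T.Walk t' r) with hp
  have hpath : p.IsPath := w0.toPath.2
  have htp : t ∈ p.support := hd p
  set q : T.Walk t' t := p.takeUntil t htp with hq
  have hqpath : q.IsPath := hpath.takeUntil htp
  have hqnil : ¬ q.reverse.Nil := by
    rw [SimpleGraph.Walk.not_nil_iff_lt_length, SimpleGraph.Walk.length_reverse]
    rcases Nat.eq_zero_or_pos q.length with h0 | h0
    · exact absurd (q.eq_of_length_eq_zero h0).symm hne.symm
    · exact h0
  obtain ⟨c, hadj, q', hq'⟩ := SimpleGraph.Walk.not_nil_iff.mp hqnil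
  have hqrs : q.reverse.support = t :: q'.support := by rw [hq']; simp
  have hnodup : q.reverse.support.Nodup := by
    rw [SimpleGraph.Walk.support_reverse, List.nodup_reverse]
    exact hqpath.support_nodup
  have htq' : t ∉ q'.support := by
    rw [hqrs] at hnodup
    exact (List.nodup_cons.mp hnodup).1
  have hcq : c ∈ q.support := by
    have : c ∈ q.reverse.support := by rw [hqrs]; exact .tail _ q'.start_mem_support
    rwa [SimpleGraph.Walk.support_reverse, List.mem_reverse] at this
  have hdesc_tc : Desc T r t c := by
    intro w
    have hw : t ∈ (q'.reverse.append w).support := hd _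
    rw [SimpleGraph.Walk.mem_support_append_iff] at hw
    rcases hw with hw | hw
    · exact absurd (by rwa [SimpleGraph.Walk.support_reverse, List.mem_reverse] at hw) htq'
    · exact hw
  refine ⟨c, ⟨hadj, hdesc_tc⟩, ?_⟩
  rw [hq] at hcq
  exact desc_of_mem_path hac p hpath (p.support_takeUntil_subset htp hcq)

end NiceTD

/-- In a nice tree decomposition (root bag empty, each node with at most 2 children, leaf
bags empty, adjacent bags differing in at most one vertex) of a graph with `n` vertices,
for every `s ≤ n` there is a node `t` with `s ≤ |V_t| ≤ 2s`. -/
theorem exists_node_with_medium_subtree {V W : Type*} [Fintype V] [Fintype W]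
    (G : SimpleGraph V) (T : SimpleGraph W) (r : W) (bag : W → Set V)
    (htree : T.Connected ∧ T.IsAcyclic)
    (hcover : ∀ v : V, ∃ t, v ∈ bag t)
    (hedge : ∀ u v : V, G.Adj u v → ∃ t, u ∈ bag t ∧ v ∈ bag t)
    (hbagconn : ∀ v : V, (T.induce {t | v ∈ bag t}).Connected)
    (hroot : bag r = ∅)
    (hchildren : ∀ t : W, {t' | IsChild T r t t'}.ncard ≤ 2)
    (hleaf : ∀ t : W, {t' | IsChild T r t t'} = ∅ → bag t = ∅)
    (hnice : ∀ t t' : W, IsChild T r t t' →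
      ((bag t \ bag t') ∪ (bag t' \ bag t)).ncard ≤ 1)
    (s : ℕ) (hs : s ≤ Fintype.card V) :
    ∃ t : W, s ≤ (Vt T r bag t).ncard ∧ (Vt T r bag t).ncard ≤ 2 * s := by
  classical
  obtain ⟨hconn, hac⟩ := htree
  set D : W → Set W := fun t => {x | Desc T r t x} with hD
  set S : Set W := {t | s ≤ (Vt T r bag t).ncard} with hS
  have hrS : r ∈ S := by
    have huniv : Vt T r bag r = Set.univ := by
      ext v
      simp only [Set.mem_univ, iff_true, Vt, Set.mem_setOf_eq]
      obtain ⟨t, ht⟩ := hcover v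
      exact ⟨t, NiceTD.desc_root t, ht⟩
    simp only [hS, Set.mem_setOf_eq, huniv, Set.ncard_univ]
    exact hs.trans_eq (Nat.card_eq_fintype_card).symm
  obtain ⟨t, htS, hmin⟩ :=
    Set.exists_min_image S (fun t => (D t).ncard) (Set.toFinite S) ⟨r, hrS⟩
  refine ⟨t, htS, ?_⟩
  have hchildlt : ∀ c, IsChild T r t c → (Vt T r bag c).ncard < s := by
    intro c hc
    by_contra hle
    push_neg at hle
    have hcS : c ∈ S := hle
    have hsub : D c ⊂ D t := by
      constructor
      · intro x hx
        exact NiceTD.desc_of_child hc hx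
      · intro hsub2
        exact NiceTD.not_desc_child_self hconn hac hc (hsub2 (NiceTD.desc_refl t))
    have hlt := Set.ncard_lt_ncard hsub (Set.toFinite _)
    have := hmin c hcS
    omega
  set C : Set W := {c | IsChild T r t c} with hC
  rcases C.eq_empty_or_nonempty with hCe | ⟨c1, hc1⟩
  · have hVte : Vt T r bag t = ∅ := by
      ext v
      simp only [Set.mem_empty_iff_false, iff_false, Vt, Set.mem_setOf_eq]
      rintro ⟨t', hd, hv⟩
      by_cases hne : t' = t
      · rw [hne, hleaf t (by rw [← hC]; exact hCe)] at hv
        exact hv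
      · obtain ⟨c, hchild, -⟩ := NiceTD.desc_step hconn hac hd hne
        have : c ∈ C := hchild
        rw [hCe] at this
        exact this
    rw [hVte]
    simp
  · have hc1' : IsChild T r t c1 := hc1
    have hsplit : ∀ A : Set V, (∀ c ∈ C, Vt T r bag c ⊆ A) →
        Vt T r bag t ⊆ (bag t \ bag c1) ∪ A := by
      intro A hA v hvmem
      obtain ⟨t', hd, hv⟩ := hvmem
      by_cases hne : t' = t
      · subst hne
        by_cases hb : v ∈ bag c1
        · exact Or.inr (hA c1 hc1 ⟨c1, NiceTD.desc_refl c1, hb⟩)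
        · exact Or.inl ⟨hv, hb⟩
      · obtain ⟨c, hchild, hdc⟩ := NiceTD.desc_step hconn hac hd hne
        exact Or.inr (hA c hchild ⟨t', hdc, hv⟩)
    have hdiff : (bag t \ bag c1).ncard ≤ 1 :=
      le_trans (Set.ncard_le_ncard Set.subset_union_left (Set.toFinite _)) (hnice t c1 hc1')
    have hlt1 : (Vt T r bag c1).ncard < s := hchildlt c1 hc1'
    rcases (C \ {c1}).eq_empty_or_nonempty with hC1 | ⟨c2, hc2⟩
    · have hCsub : ∀ c ∈ C, c = c1 := by
        intro c hc
        by_contra hne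
        have hmem : c ∈ C \ {c1} := ⟨hc, fun h => hne (by simpa using h)⟩
        rw [hC1] at hmem
        exact hmem
      have hsub := hsplit (Vt T r bag c1) (fun c hc => by rw [hCsub c hc])
      have h1 : (Vt T r bag t).ncard ≤
          (bag t \ bag c1).ncard + (Vt T r bag c1).ncard :=
        le_trans (Set.ncard_le_ncard hsub (Set.toFinite _)) (Set.ncard_union_le _ _)
      omega
    · obtain ⟨hc2C, hc2ne⟩ := hc2
      have hc2' : IsChild T r t c2 := hc2C
      have hlt2 : (Vt T r bag c2).ncard < s := hchildlt c2 hc2'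
      have hpair : C = {c1, c2} := by
        refine (Set.eq_of_subset_of_ncard_le ?_ ?_ (Set.toFinite _)).symm
        · intro x hx
          rcases hx with hx | hx
          · exact hx ▸ hc1
          · exact hx ▸ hc2C
        · have hcard2 : ({c1, c2} : Set W).ncard = 2 :=
            Set.ncard_pair (by simpa [eq_comm] using hc2ne)
          rw [hcard2]
          exact hchildren t
      have hsub := hsplit (Vt T r bag c1 ∪ Vt T r bag c2) (fun c hc => by
        rw [hpair] at hc
        rcases hc with hc | hc
        · exact hc ▸ Set.subset_union_left
        · exact hc ▸ Set.subset_union_right)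
      have h1 : (Vt T r bag t).ncard ≤
          (bag t \ bag c1).ncard + ((Vt T r bag c1).ncard + (Vt T r bag c2).ncard) :=
        le_trans (Set.ncard_le_ncard hsub (Set.toFinite _))
          (le_trans (Set.ncard_union_le _ _)
            (by exact Nat.add_le_add_left (Set.ncard_union_le _ _) _))
      omega
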